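/- Suppose d ≤ k ≤ n, and let S^{(n)} ⊋ S^{(n−1)} ⊋ ... ⊋ S^{(k)} be any decreasing chain of subsets of {1,...,n} with S^{(n)} = {1,...,n}, |S^{(j)}| = j for each j, and such that for each j ∈ {k+1,...,n}, S^{(j−1)} = S^{(j)} ∖ {i_j} where i_j minimizes f(S^{(j)} ∖ {i}) over i ∈ S^{(j)} (backward greedy removal). Then f(S^{(k)}) ≤ ((n−d+1)/(k−d+1))·z_k. -/

import Mathlib

open Matrix Finset

noncomputable section


/-- The information matrix `∑_{i ∈ S} a_i a_iᵀ + λ I_d`. -/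
def infoM (d n : ℕ) (a : Fin n → Fin d → ℝ) (lam : ℝ) (S : Finset (Fin n)) :
    Matrix (Fin d) (Fin d) ℝ :=
  (∑ i ∈ S, Matrix.vecMulVec (a i) (a i)) + lam • (1 : Matrix (Fin d) (Fin d) ℝ)

/-- `f(S) = tr((∑_{i∈S} a_i a_iᵀ + λ I_d)⁻¹)`. -/
def fS (d n : ℕ) (a : Fin n → Fin d → ℝ) (lam : ℝ) (S : Finset (Fin n)) : ℝ :=
  Matrix.trace (infoM d n a lam S)⁻¹

/-- `z_k = min_{|S| = k} f(S)`. -/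
def zk (d n : ℕ) (a : Fin n → Fin d → ℝ) (lam : ℝ) (k : ℕ) : ℝ :=
  sInf {r : ℝ | ∃ S : Finset (Fin n), S.card = k ∧ fS d n a lam S = r}

end


section AuxLemmas

noncomputable section

variable {d : ℕ}

lemma trace_vecMulVec' (u v : Fin d → ℝ) : Matrix.trace (vecMulVec u v) = u ⬝ᵥ v := by
  simp [Matrix.trace, vecMulVec_apply, dotProduct, Matrix.diag]

lemma vecMulVec_mul' (u v : Fin d → ℝ) (A : Matrix (Fin d) (Fin d) ℝ) :
    vecMulVec u v * A = vecMulVec u (v ᵥ* A) := by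
  ext i j
  simp [Matrix.mul_apply, vecMulVec_apply, Matrix.vecMul, dotProduct, Finset.mul_sum, mul_assoc]

lemma mul_vecMulVec' (u v : Fin d → ℝ) (A : Matrix (Fin d) (Fin d) ℝ) :
    A * vecMulVec u v = vecMulVec (A *ᵥ u) v := by
  ext i j
  simp [Matrix.mul_apply, vecMulVec_apply, Matrix.mulVec, dotProduct, Finset.sum_mul, mul_assoc]

lemma vecMulVec_mul_vecMulVec (u v x y : Fin d → ℝ) :
    vecMulVec u v * vecMulVec x y = (v ⬝ᵥ x) • vecMulVec u y := by
  rw [vecMulVec_mul']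
  ext i j
  simp [vecMulVec_apply, Matrix.vecMul, dotProduct, Finset.sum_mul, Finset.mul_sum]
  congr 1; ext x1; ring

/-- Sherman-Morrison. -/
lemma sherman_morrison (M : Matrix (Fin d) (Fin d) ℝ) (hM : IsUnit M.det)
    (u v : Fin d → ℝ) (hc : 1 + v ⬝ᵥ (M⁻¹ *ᵥ u) ≠ 0) :
    (M + vecMulVec u v)⁻¹ =
      M⁻¹ - (1 + v ⬝ᵥ (M⁻¹ *ᵥ u))⁻¹ • vecMulVec (M⁻¹ *ᵥ u) (v ᵥ* M⁻¹) := by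
  set c : ℝ := 1 + v ⬝ᵥ (M⁻¹ *ᵥ u) with hcdef
  apply Matrix.inv_eq_right_inv
  have h1 : M * M⁻¹ = 1 := Matrix.mul_nonsing_inv M hM
  have h2 : M * vecMulVec (M⁻¹ *ᵥ u) (v ᵥ* M⁻¹) = vecMulVec u (v ᵥ* M⁻¹) := by
    rw [mul_vecMulVec', Matrix.mulVec_mulVec, h1, Matrix.one_mulVec]
  have h3 : vecMulVec u v * M⁻¹ = vecMulVec u (v ᵥ* M⁻¹) := vecMulVec_mul' u v M⁻¹
  have h4 : vecMulVec u v * vecMulVec (M⁻¹ *ᵥ u) (v ᵥ* M⁻¹)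
      = (c - 1) • vecMulVec u (v ᵥ* M⁻¹) := by
    rw [vecMulVec_mul_vecMulVec]
    congr 1
    simp [hcdef]
  rw [add_mul, mul_sub, mul_sub, Matrix.mul_smul, Matrix.mul_smul, h1, h2, h3, h4,
    smul_smul c⁻¹ (c-1)]
  have hs : (1 : ℝ) - c⁻¹ - c⁻¹ * (c - 1) = 0 := by field_simp; ring
  calc 1 - c⁻¹ • vecMulVec u (v ᵥ* M⁻¹) +
        (vecMulVec u (v ᵥ* M⁻¹) - (c⁻¹ * (c - 1)) • vecMulVec u (v ᵥ* M⁻¹))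
      = 1 + ((1 - c⁻¹ - c⁻¹ * (c - 1)) • vecMulVec u (v ᵥ* M⁻¹)) := by
        rw [sub_smul, sub_smul, one_smul]; abel
    _ = 1 := by rw [hs, zero_smul, add_zero]

lemma vecMulVec_mulVec' (u v x : Fin d → ℝ) :
    vecMulVec u v *ᵥ x = (v ⬝ᵥ x) • u := by
  ext i
  simp only [Matrix.mulVec, vecMulVec_apply, dotProduct, Pi.smul_apply, smul_eq_mul,
    Finset.sum_mul]
  congr 1; ext j; ring

lemma posSemidef_vecMulVec_self (u : Fin d → ℝ) : (vecMulVec u u).PosSemidef := by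
  rw [Matrix.posSemidef_iff_dotProduct_mulVec]
  constructor
  · ext i j
    simp [Matrix.conjTranspose, vecMulVec_apply, mul_comm]
  · intro x
    rw [vecMulVec_mulVec']
    simp only [RCLike.star_def, starRingEnd_apply, star_trivial, dotProduct_smul]
    rw [show (u ⬝ᵥ x) = (x ⬝ᵥ u) from dotProduct_comm u x, smul_eq_mul]
    exact mul_self_nonneg _

lemma posDef_infoM (n : ℕ) (a : Fin n → Fin d → ℝ) (lam : ℝ) (hlam : 0 < lam)
    (S : Finset (Fin n)) (hd : 0 < d) : (infoM d n a lam S).PosDef := by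
  classical
  have hsum : (∑ i ∈ S, vecMulVec (a i) (a i)).PosSemidef := by
    induction S using Finset.induction with
    | empty => simpa using (Matrix.PosSemidef.zero : (0 : Matrix (Fin d) (Fin d) ℝ).PosSemidef)
    | insert _ _ h ih =>
        rw [Finset.sum_insert h]
        exact (posSemidef_vecMulVec_self _).add ih
  refine Matrix.PosDef.posSemidef_add hsum ?_
  rw [Matrix.smul_one_eq_diagonal]
  exact Matrix.PosDef.diagonal (fun _ => hlam)

lemma vecMulVec_neg_left (u v : Fin d → ℝ) : vecMulVec (-u) v = -vecMulVec u v := by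
  ext i j; simp [vecMulVec_apply]

lemma inv_transpose_self {M : Matrix (Fin d) (Fin d) ℝ} (hM : M.PosDef) : M⁻¹ᵀ = M⁻¹ := by
  have h := hM.inv.isHermitian
  rwa [Matrix.IsHermitian, Matrix.conjTranspose_eq_transpose_of_trivial] at h

lemma quad_lt_one {M' : Matrix (Fin d) (Fin d) ℝ} (hM' : M'.PosDef) (u : Fin d → ℝ) :
    u ⬝ᵥ ((M' + vecMulVec u u)⁻¹ *ᵥ u) < 1 := by
  set M : Matrix (Fin d) (Fin d) ℝ := M' + vecMulVec u u with hMdef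
  have hM : M.PosDef := hM'.add_posSemidef (posSemidef_vecMulVec_self u)
  have hdet : IsUnit M.det := hM.isUnit.map (Matrix.detMonoidHom)
  set x : Fin d → ℝ := M⁻¹ *ᵥ u with hx
  have hMx : M *ᵥ x = u := by
    rw [hx, Matrix.mulVec_mulVec, Matrix.mul_nonsing_inv M hdet, Matrix.one_mulVec]
  set t : ℝ := u ⬝ᵥ x with ht
  by_cases hx0 : x = 0
  · have : u = 0 := by rw [← hMx, hx0, Matrix.mulVec_zero]
    simp [ht, this]
  · have hq : 0 < x ⬝ᵥ (M' *ᵥ x) := by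
      have := hM'.dotProduct_mulVec_pos hx0
      simpa using this
    have hMxq : x ⬝ᵥ (M *ᵥ x) = t := by rw [hMx, dotProduct_comm]
    have hvv : x ⬝ᵥ (vecMulVec u u *ᵥ x) = t * t := by
      rw [vecMulVec_mulVec', dotProduct_smul, smul_eq_mul, dotProduct_comm x u, ← ht]
    have hsplit : x ⬝ᵥ (M' *ᵥ x) = t - t * t := by
      have : M' = M - vecMulVec u u := by rw [hMdef]; abel
      rw [this, Matrix.sub_mulVec, dotProduct_sub, hMxq, hvv]
    rw [hsplit] at hq
    nlinarith

lemma fS_erase_eq (n : ℕ) (a : Fin n → Fin d → ℝ) (lam : ℝ) (hlam : 0 < lam) (hd : 0 < d)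
    (S : Finset (Fin n)) (i : Fin n) (hi : i ∈ S) :
    fS d n a lam (S.erase i) = fS d n a lam S +
      (1 - a i ⬝ᵥ ((infoM d n a lam S)⁻¹ *ᵥ a i))⁻¹ *
        (((infoM d n a lam S)⁻¹ *ᵥ a i) ⬝ᵥ ((infoM d n a lam S)⁻¹ *ᵥ a i)) := by
  classical
  set M : Matrix (Fin d) (Fin d) ℝ := infoM d n a lam S with hMdef
  have hsum : infoM d n a lam S = infoM d n a lam (S.erase i) + vecMulVec (a i) (a i) := by
    rw [infoM, infoM, ← Finset.sum_erase_add S _ hi]; abel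
  have hM'PD : (infoM d n a lam (S.erase i)).PosDef := posDef_infoM n a lam hlam _ hd
  have hMPD : M.PosDef := posDef_infoM n a lam hlam S hd
  have hdet : IsUnit M.det := hMPD.isUnit.map (Matrix.detMonoidHom)
  have ht1 : a i ⬝ᵥ (M⁻¹ *ᵥ a i) < 1 := by
    have := quad_lt_one hM'PD (a i)
    rwa [← hsum] at this
  set t : ℝ := a i ⬝ᵥ (M⁻¹ *ᵥ a i) with ht
  have hc : 1 + a i ⬝ᵥ (M⁻¹ *ᵥ (-(a i))) ≠ 0 := by
    rw [Matrix.mulVec_neg, dotProduct_neg, ← ht]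
    intro h; linarith
  have hMe : infoM d n a lam (S.erase i) = M + vecMulVec (-(a i)) (a i) := by
    rw [vecMulVec_neg_left, hMdef, hsum]; abel
  have hSM := sherman_morrison M hdet (-(a i)) (a i) hc
  rw [fS, fS, hMe, hSM, Matrix.trace_sub, Matrix.trace_smul, trace_vecMulVec', smul_eq_mul]
  have hvm : a i ᵥ* M⁻¹ = M⁻¹ *ᵥ a i := by
    conv_lhs => rw [← inv_transpose_self hMPD]
    rw [Matrix.vecMul_transpose]
  rw [hvm, Matrix.mulVec_neg, dotProduct_neg, neg_dotProduct, ← ht, ← hMdef]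
  ring

lemma trace_nonneg_psd {M : Matrix (Fin d) (Fin d) ℝ} (hM : M.PosSemidef) :
    0 ≤ Matrix.trace M := by
  rw [Matrix.trace]
  apply Finset.sum_nonneg
  intro i _
  have := hM.dotProduct_mulVec_nonneg (Pi.single i 1)
  simpa [Matrix.mulVec, dotProduct, Pi.single_apply] using this

lemma trace_inv_nonneg {M : Matrix (Fin d) (Fin d) ℝ} (hM : M.PosDef) :
    0 ≤ Matrix.trace M⁻¹ := trace_nonneg_psd hM.inv.posSemidef

lemma trace_inv_sq_nonneg {M : Matrix (Fin d) (Fin d) ℝ} (hM : M.PosDef) :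
    0 ≤ Matrix.trace (M⁻¹ * M⁻¹) := by
  apply trace_nonneg_psd
  have : M⁻¹ * M⁻¹ = M⁻¹ᴴ * M⁻¹ := by
    rw [Matrix.conjTranspose_eq_transpose_of_trivial, inv_transpose_self hM]
  rw [this]
  exact Matrix.posSemidef_conjTranspose_mul_self _

lemma sum_quad_eq (n : ℕ) (a : Fin n → Fin d → ℝ) (lam : ℝ) (hlam : 0 < lam) (hd : 0 < d)
    (S : Finset (Fin n)) :
    ∑ i ∈ S, a i ⬝ᵥ ((infoM d n a lam S)⁻¹ *ᵥ a i)
      = (d : ℝ) - lam * Matrix.trace (infoM d n a lam S)⁻¹ := by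
  set M : Matrix (Fin d) (Fin d) ℝ := infoM d n a lam S with hMdef
  have hMPD : M.PosDef := posDef_infoM n a lam hlam S hd
  have hdet : IsUnit M.det := hMPD.isUnit.map (Matrix.detMonoidHom)
  have hterm : ∀ i ∈ S, a i ⬝ᵥ (M⁻¹ *ᵥ a i)
      = Matrix.trace (M⁻¹ * vecMulVec (a i) (a i)) := by
    intro i _
    rw [mul_vecMulVec', trace_vecMulVec', dotProduct_comm]
  rw [Finset.sum_congr rfl hterm, ← Matrix.trace_sum, ← Finset.mul_sum]
  have hSvv : ∑ i ∈ S, vecMulVec (a i) (a i) = M - lam • 1 := by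
    rw [hMdef, infoM]; abel
  rw [hSvv, mul_sub, Matrix.nonsing_inv_mul M hdet, Matrix.mul_smul, mul_one,
    Matrix.trace_sub, Matrix.trace_smul, Matrix.trace_one, smul_eq_mul]
  simp

lemma sum_r_le (n : ℕ) (a : Fin n → Fin d → ℝ) (lam : ℝ) (hlam : 0 < lam) (hd : 0 < d)
    (S : Finset (Fin n)) :
    ∑ i ∈ S, ((infoM d n a lam S)⁻¹ *ᵥ a i) ⬝ᵥ ((infoM d n a lam S)⁻¹ *ᵥ a i)
      ≤ Matrix.trace (infoM d n a lam S)⁻¹ := by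
  set M : Matrix (Fin d) (Fin d) ℝ := infoM d n a lam S with hMdef
  have hMPD : M.PosDef := posDef_infoM n a lam hlam S hd
  have hdet : IsUnit M.det := hMPD.isUnit.map (Matrix.detMonoidHom)
  have hterm : ∀ i ∈ S, (M⁻¹ *ᵥ a i) ⬝ᵥ (M⁻¹ *ᵥ a i)
      = Matrix.trace (M⁻¹ * vecMulVec (a i) (a i) * M⁻¹) := by
    intro i _
    rw [mul_vecMulVec', vecMulVec_mul', trace_vecMulVec']
    have hvm : a i ᵥ* M⁻¹ = M⁻¹ *ᵥ a i := by
      conv_lhs => rw [← inv_transpose_self hMPD]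
      rw [Matrix.vecMul_transpose]
    rw [hvm]
  have key : ∑ i ∈ S, (M⁻¹ *ᵥ a i) ⬝ᵥ (M⁻¹ *ᵥ a i)
      = Matrix.trace M⁻¹ - lam * Matrix.trace (M⁻¹ * M⁻¹) := by
    rw [Finset.sum_congr rfl hterm, ← Matrix.trace_sum]
    have : ∑ i ∈ S, M⁻¹ * vecMulVec (a i) (a i) * M⁻¹
        = M⁻¹ * (∑ i ∈ S, vecMulVec (a i) (a i)) * M⁻¹ := by
      rw [Finset.mul_sum, Finset.sum_mul]
    rw [this]
    have hSvv : ∑ i ∈ S, vecMulVec (a i) (a i) = M - lam • 1 := by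
      rw [hMdef, infoM]; abel
    rw [hSvv, mul_sub, sub_mul, Matrix.nonsing_inv_mul M hdet, Matrix.one_mul,
      Matrix.mul_smul, mul_one, Matrix.smul_mul, Matrix.trace_sub, Matrix.trace_smul,
      smul_eq_mul]
  rw [key]
  have := trace_inv_sq_nonneg hMPD
  nlinarith [hlam]


lemma t_lt_one (n : ℕ) (a : Fin n → Fin d → ℝ) (lam : ℝ) (hlam : 0 < lam) (hd : 0 < d)
    (S : Finset (Fin n)) (i : Fin n) (hi : i ∈ S) :
    a i ⬝ᵥ ((infoM d n a lam S)⁻¹ *ᵥ a i) < 1 := by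
  have hsum : infoM d n a lam S = infoM d n a lam (S.erase i) + vecMulVec (a i) (a i) := by
    rw [infoM, infoM, ← Finset.sum_erase_add S _ hi]; abel
  have := quad_lt_one (posDef_infoM n a lam hlam (S.erase i) hd) (a i)
  rwa [← hsum] at this

lemma greedy_step (n : ℕ) (a : Fin n → Fin d → ℝ) (lam : ℝ) (hlam : 0 < lam) (hd : 0 < d)
    (S : Finset (Fin n)) (hcard : d < S.card) (i : Fin n) (hi : i ∈ S)
    (hmin : ∀ i' ∈ S, fS d n a lam (S.erase i) ≤ fS d n a lam (S.erase i')) :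
    fS d n a lam (S.erase i) ≤
      (((S.card : ℝ) - d + 1) / ((S.card : ℝ) - d)) * fS d n a lam S := by
  classical
  set M : Matrix (Fin d) (Fin d) ℝ := infoM d n a lam S with hMdef
  have hMPD : M.PosDef := posDef_infoM n a lam hlam S hd
  set f0 : ℝ := fS d n a lam S with hf0
  have hf0nn : 0 ≤ f0 := trace_inv_nonneg hMPD
  set t : Fin n → ℝ := fun i' => a i' ⬝ᵥ (M⁻¹ *ᵥ a i') with htdef
  set r : Fin n → ℝ := fun i' => (M⁻¹ *ᵥ a i') ⬝ᵥ (M⁻¹ *ᵥ a i') with hrdef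
  have htlt : ∀ i' ∈ S, t i' < 1 := fun i' hi' => t_lt_one n a lam hlam hd S i' hi'
  have hrnn : ∀ i', 0 ≤ r i' := fun i' => Finset.sum_nonneg (fun j _ => mul_self_nonneg _)
  have herase : ∀ i' ∈ S, fS d n a lam (S.erase i') = f0 + (1 - t i')⁻¹ * r i' :=
    fun i' hi' => fS_erase_eq n a lam hlam hd S i' hi'
  set g : ℝ := fS d n a lam (S.erase i) - f0 with hgdef
  have hgval : g = (1 - t i)⁻¹ * r i := by rw [hgdef, herase i hi]; ring
  have hgnn : 0 ≤ g := by
    rw [hgval]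
    have h1 : 0 < 1 - t i := by linarith [htlt i hi]
    exact mul_nonneg (le_of_lt (inv_pos.2 h1)) (hrnn i)
  have hkey : ∀ i' ∈ S, g * (1 - t i') ≤ r i' := by
    intro i' hi'
    have h1 : fS d n a lam (S.erase i) ≤ fS d n a lam (S.erase i') := hmin i' hi'
    rw [herase i hi, herase i' hi'] at h1
    have hpos : 0 < 1 - t i' := by linarith [htlt i' hi']
    have h2 : g ≤ (1 - t i')⁻¹ * r i' := by rw [hgdef, herase i hi]; linarith
    rw [inv_mul_eq_div] at h2
    exact (le_div_iff₀ hpos).1 h2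
  have hsumt : ∑ i' ∈ S, t i' = (d : ℝ) - lam * f0 := sum_quad_eq n a lam hlam hd S
  have hsumr : ∑ i' ∈ S, r i' ≤ f0 := sum_r_le n a lam hlam hd S
  have hsum1t : ∑ i' ∈ S, (1 - t i') = (S.card : ℝ) - d + lam * f0 := by
    rw [Finset.sum_sub_distrib, hsumt, Finset.sum_const, nsmul_eq_mul, mul_one]
    ring
  have hmain : g * ((S.card : ℝ) - d) ≤ f0 := by
    have h3 : g * ((S.card : ℝ) - d + lam * f0) ≤ f0 := by
      calc g * ((S.card : ℝ) - d + lam * f0) = ∑ i' ∈ S, g * (1 - t i') := by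
            rw [← Finset.mul_sum, hsum1t]
        _ ≤ ∑ i' ∈ S, r i' := Finset.sum_le_sum hkey
        _ ≤ f0 := hsumr
    nlinarith [mul_nonneg hgnn (mul_nonneg hlam.le hf0nn)]
  have hcd : (0:ℝ) < (S.card : ℝ) - d := by
    have : (d:ℝ) < (S.card : ℝ) := by exact_mod_cast hcard
    linarith
  have hg2 : g ≤ f0 / ((S.card : ℝ) - d) := (le_div_iff₀ hcd).2 hmain
  have heq : (((S.card : ℝ) - d + 1) / ((S.card : ℝ) - d)) * f0
      = f0 + f0 / ((S.card : ℝ) - d) := by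
    field_simp
  rw [heq]
  have : fS d n a lam (S.erase i) = f0 + g := by rw [hgdef]; ring
  linarith

lemma fS_insert_le (n : ℕ) (a : Fin n → Fin d → ℝ) (lam : ℝ) (hlam : 0 < lam) (hd : 0 < d)
    (S : Finset (Fin n)) (i : Fin n) :
    fS d n a lam (insert i S) ≤ fS d n a lam S := by
  classical
  by_cases hi : i ∈ S
  · rw [Finset.insert_eq_self.2 hi]
  · have h1 : S = (insert i S).erase i := (Finset.erase_insert hi).symm
    have hi' : i ∈ insert i S := Finset.mem_insert_self i S
    have h2 := fS_erase_eq n a lam hlam hd (insert i S) i hi'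
    rw [← h1] at h2
    have htlt := t_lt_one n a lam hlam hd (insert i S) i hi'
    have hrnn : 0 ≤ ((infoM d n a lam (insert i S))⁻¹ *ᵥ a i) ⬝ᵥ
        ((infoM d n a lam (insert i S))⁻¹ *ᵥ a i) :=
      Finset.sum_nonneg (fun j _ => mul_self_nonneg _)
    have : 0 ≤ (1 - a i ⬝ᵥ ((infoM d n a lam (insert i S))⁻¹ *ᵥ a i))⁻¹ *
        (((infoM d n a lam (insert i S))⁻¹ *ᵥ a i) ⬝ᵥ
          ((infoM d n a lam (insert i S))⁻¹ *ᵥ a i)) := by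
      have h3 : 0 < 1 - a i ⬝ᵥ ((infoM d n a lam (insert i S))⁻¹ *ᵥ a i) := by linarith
      positivity
    linarith

lemma fS_univ_le (n : ℕ) (a : Fin n → Fin d → ℝ) (lam : ℝ) (hlam : 0 < lam) (hd : 0 < d)
    (S : Finset (Fin n)) :
    fS d n a lam Finset.univ ≤ fS d n a lam S := by
  classical
  have key : ∀ T : Finset (Fin n), fS d n a lam (S ∪ T) ≤ fS d n a lam S := by
    intro T
    induction T using Finset.induction with
    | empty => rw [Finset.union_empty]
    | insert _ _ hnot ih =>
        rw [Finset.union_insert]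
        exact le_trans (fS_insert_le n a lam hlam hd _ _) ih
  have := key Finset.univ
  rwa [show S ∪ (Finset.univ : Finset (Fin n)) = Finset.univ from
    Finset.eq_univ_iff_forall.2 (fun x => Finset.mem_union_right _ (Finset.mem_univ x))] at this


end
end AuxLemmas

theorem stmt19 (d n : ℕ) (hd : 1 ≤ d) (hdn : d ≤ n)
    (a : Fin n → Fin d → ℝ) (lam : ℝ) (hlam : 0 < lam)
    (k : ℕ) (hdk : d ≤ k) (hkn : k ≤ n)
    (T : ℕ → Finset (Fin n)) (hTn : T n = Finset.univ)
    (hcard : ∀ j, k ≤ j → j ≤ n → (T j).card = j)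
    (hstep : ∀ j, k < j → j ≤ n → ∃ i ∈ T j,
      (∀ i' ∈ T j, fS d n a lam ((T j).erase i) ≤ fS d n a lam ((T j).erase i')) ∧
      T (j - 1) = (T j).erase i) :
    fS d n a lam (T k) ≤ (((n : ℝ) - d + 1) / ((k : ℝ) - d + 1)) * zk d n a lam k := by
  classical
  have hd0 : 0 < d := hd
  -- the chain bound
  have chain : ∀ p : ℕ, p ≤ n - k →
      fS d n a lam (T (n - p)) ≤
        (((n : ℝ) - d + 1) / (((n - p : ℕ) : ℝ) - d + 1)) * fS d n a lam (T n) := by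
    intro p
    induction p with
    | zero =>
        intro _
        rw [Nat.sub_zero]
        have hpos : (0:ℝ) < (n : ℝ) - d + 1 := by
          have : (d:ℝ) ≤ (n:ℝ) := by exact_mod_cast hdn
          linarith
        rw [div_self (ne_of_gt hpos), one_mul]
    | succ p ih =>
        intro hp
        have hp' : p ≤ n - k := by omega
        have hkj : k < n - p := by omega
        have hjn : n - p ≤ n := Nat.sub_le n p
        obtain ⟨i, hi, hmin, hTj⟩ := hstep (n - p) hkj hjn
        have hcardj : (T (n - p)).card = n - p := hcard (n - p) (le_of_lt hkj) hjn
        have hdj : d < (T (n - p)).card := by omega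
        have hgr := greedy_step n a lam hlam hd0 (T (n - p)) hdj i hi hmin
        have hj1 : n - (p + 1) = (n - p) - 1 := by omega
        rw [hj1, hTj]
        rw [hcardj] at hgr
        -- real casts
        have hjge : (d : ℝ) + 1 ≤ ((n - p : ℕ) : ℝ) := by exact_mod_cast (by omega : d + 1 ≤ n - p)
        have hnd : (0:ℝ) < (n : ℝ) - d + 1 := by
          have : (d:ℝ) ≤ (n:ℝ) := by exact_mod_cast hdn
          linarith
        set x : ℝ := ((n - p : ℕ) : ℝ) with hxdef
        have hx1 : (1:ℝ) ≤ x - d := by linarith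
    
        have hcast : (((n - p) - 1 : ℕ) : ℝ) = x - 1 := by
          rw [hxdef]
          have h1 : 1 ≤ n - p := by omega
          push_cast [Nat.cast_sub h1]
          ring
        have ihp := ih hp'
        have hc1 : (0:ℝ) ≤ (x - d + 1) / (x - d) := by positivity
        calc fS d n a lam ((T (n - p)).erase i)
            ≤ ((x - d + 1) / (x - d)) * fS d n a lam (T (n - p)) := hgr
          _ ≤ ((x - d + 1) / (x - d)) *
              ((((n : ℝ) - d + 1) / (x - d + 1)) * fS d n a lam (T n)) :=
              mul_le_mul_of_nonneg_left ihp hc1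
          _ = (((n : ℝ) - d + 1) / ((((n - p) - 1 : ℕ) : ℝ) - d + 1)) * fS d n a lam (T n) := by
              rw [hcast, ← mul_assoc]
              congr 1
              have h2 : x - d ≠ 0 := by linarith
              have h3 : x - d + 1 ≠ 0 := by linarith
              have h4 : x - 1 - (d:ℝ) + 1 = x - d := by ring
              rw [h4]
              field_simp
  -- apply chain at p = n - k
  have hchain := chain (n - k) le_rfl
  have hnk : n - (n - k) = k := by omega
  rw [hnk] at hchain
  -- f(univ) ≤ zk
  have hzk : fS d n a lam Finset.univ ≤ zk d n a lam k := by
    apply le_csInf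
    · obtain ⟨s, _, hscard⟩ := Finset.exists_subset_card_eq
        (show k ≤ (Finset.univ : Finset (Fin n)).card by rw [Finset.card_univ, Fintype.card_fin]; exact hkn)
      exact ⟨fS d n a lam s, s, hscard, rfl⟩
    · rintro r ⟨S, hScard, rfl⟩
      exact fS_univ_le n a lam hlam hd0 S
  have hCnn : (0:ℝ) ≤ ((n : ℝ) - d + 1) / ((k : ℝ) - d + 1) := by
    have h1 : (d:ℝ) ≤ (n:ℝ) := by exact_mod_cast hdn
    have h2 : (d:ℝ) ≤ (k:ℝ) := by exact_mod_cast hdk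
    exact div_nonneg (by linarith) (by linarith)
  calc fS d n a lam (T k)
      ≤ (((n : ℝ) - d + 1) / ((k : ℝ) - d + 1)) * fS d n a lam (T n) := hchain
    _ = (((n : ℝ) - d + 1) / ((k : ℝ) - d + 1)) * fS d n a lam Finset.univ := by rw [hTn]
    _ ≤ (((n : ℝ) - d + 1) / ((k : ℝ) - d + 1)) * zk d n a lam k :=
        mul_le_mul_of_nonneg_left hzk hCnn
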